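/- arXiv:math/0612110 — 2 statements merged into one kernel-verified Lean document; each statement's English description precedes it below -/
import Mathlib

section
/- Let β(τ) = (1/b₀ + cτ)^{-1} with b₀, c > 0. Then for any constants c₁, c₂ > 0 there exists a constant C = C(c₁, c₂, c) such that ∫₀^T e^{-c₁(T-σ)} β(σ)^{c₂} dσ ≤ C β(T)^{c₂} for all T ≥ 0. -/
/-- Key integral estimate: for `β(τ) = (1/b₀ + cτ)⁻¹` and any `c₁, c₂ > 0`
there is `C = C(c₁,c₂,c)` with
`∫₀^T e^{-c₁(T-σ)} β(σ)^{c₂} dσ ≤ C β(T)^{c₂}` for all `T ≥ 0`. -/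
theorem integral_estimate (b₀ c : ℝ) (hb : 0 < b₀) (hc : 0 < c)
    (c₁ c₂ : ℝ) (h1 : 0 < c₁) (h2 : 0 < c₂) :
    ∃ C > (0:ℝ), ∀ T : ℝ, 0 ≤ T →
      (∫ σ in (0:ℝ)..T, Real.exp (-c₁ * (T - σ)) * ((1 / b₀ + c * σ)⁻¹) ^ c₂)
        ≤ C * ((1 / b₀ + c * T)⁻¹) ^ c₂ := by
  set a := c * b₀ with ha
  have hapos : 0 < a := mul_pos hc hb
  set K := (1 + 2*a*c₂/c₁) ^ c₂ with hK
  have hKpos : 0 < K := Real.rpow_pos_of_pos (by positivity) _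
  refine ⟨K * (2/c₁), by positivity, ?_⟩
  intro T hT
  have hβT : 0 < (1/b₀ + c*T)⁻¹ := by positivity
  -- pointwise bound
  have key : ∀ σ ∈ Set.Icc (0:ℝ) T,
      Real.exp (-c₁*(T-σ)) * ((1/b₀ + c*σ)⁻¹)^c₂
        ≤ K * Real.exp (-(c₁/2)*(T-σ)) * ((1/b₀ + c*T)⁻¹)^c₂ := by
    intro σ hσ
    obtain ⟨hσ0, hσT⟩ := hσ
    have hβσ : 0 < (1/b₀ + c*σ)⁻¹ := by positivity
    have hX : 0 < 1/b₀ + c*σ := by positivity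
    have hY : 0 < 1/b₀ + c*T := by positivity
    have h00 : 0 ≤ T - σ := by linarith
    have hM : 0 < 1 + a*(T-σ) := by nlinarith [mul_nonneg hapos.le h00]
    have h5 : (1/b₀ + c*σ)⁻¹ ≤ (1 + a*(T-σ)) * (1/b₀ + c*T)⁻¹ := by
      rw [inv_le_iff_one_le_mul₀ hX]
      have : (1/b₀ + c*T) ≤ (1 + a*(T-σ)) * (1/b₀ + c*σ) := by
        have e : (1 + a*(T-σ)) * (1/b₀ + c*σ) = 1/b₀ + c*T + c*c*b₀*σ*(T-σ) := by
          rw [ha]; field_simp; ring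
        nlinarith [mul_nonneg (mul_nonneg (mul_nonneg (mul_nonneg hc.le hc.le) hb.le) hσ0) h00]
      calc (1:ℝ) = (1/b₀ + c*T) * (1/b₀ + c*T)⁻¹ := by field_simp
        _ ≤ ((1 + a*(T-σ)) * (1/b₀ + c*σ)) * (1/b₀ + c*T)⁻¹ := by
            exact mul_le_mul_of_nonneg_right this (le_of_lt (inv_pos.mpr hY))
        _ = (1 + a*(T-σ)) * (1/b₀ + c*T)⁻¹ * (1/b₀ + c*σ) := by ring
    have h6 : (1 + a*(T-σ)) ≤ (1 + 2*a*c₂/c₁) * Real.exp ((c₁/(2*c₂)) * (T-σ)) := by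
      have he := Real.add_one_le_exp ((c₁/(2*c₂)) * (T-σ))
      have h0 : 0 ≤ T - σ := by linarith
      have h7 : (1:ℝ) + (c₁/(2*c₂)) * (T-σ) ≤ Real.exp ((c₁/(2*c₂)) * (T-σ)) := by linarith
      have h8 : 0 < 1 + 2*a*c₂/c₁ := by positivity
      calc (1:ℝ) + a*(T-σ) ≤ (1 + 2*a*c₂/c₁) * (1 + (c₁/(2*c₂)) * (T-σ)) := by
            have : 0 ≤ 2*a*c₂/c₁ := by positivity
            have e1 : (1 + 2*a*c₂/c₁) * (1 + (c₁/(2*c₂)) * (T-σ))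
                = 1 + 2*a*c₂/c₁ + (c₁/(2*c₂)) * (T-σ)
                  + (2*a*c₂/c₁) * ((c₁/(2*c₂)) * (T-σ)) := by ring
            have e2 : (2*a*c₂/c₁) * ((c₁/(2*c₂)) * (T-σ)) = a * (T-σ) := by
              field_simp
            rw [e1, e2]
            have : 0 ≤ (c₁/(2*c₂)) * (T-σ) := by positivity
            linarith
        _ ≤ (1 + 2*a*c₂/c₁) * Real.exp ((c₁/(2*c₂)) * (T-σ)) :=
            mul_le_mul_of_nonneg_left h7 (le_of_lt h8)
    have h9 : ((1/b₀ + c*σ)⁻¹)^c₂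
        ≤ K * Real.exp ((c₁/2) * (T-σ)) * ((1/b₀ + c*T)⁻¹)^c₂ := by
      have hb1 : (1/b₀ + c*σ)⁻¹
          ≤ ((1 + 2*a*c₂/c₁) * Real.exp ((c₁/(2*c₂)) * (T-σ))) * (1/b₀ + c*T)⁻¹ :=
        h5.trans (mul_le_mul_of_nonneg_right h6 (le_of_lt hβT))
      have := Real.rpow_le_rpow (le_of_lt hβσ) hb1 (le_of_lt h2)
      calc ((1/b₀ + c*σ)⁻¹)^c₂
          ≤ (((1 + 2*a*c₂/c₁) * Real.exp ((c₁/(2*c₂)) * (T-σ))) * (1/b₀ + c*T)⁻¹)^c₂ := this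
        _ = K * Real.exp ((c₁/2) * (T-σ)) * ((1/b₀ + c*T)⁻¹)^c₂ := by
            rw [Real.mul_rpow (by positivity) (le_of_lt hβT),
              Real.mul_rpow (by positivity) (Real.exp_pos _).le,
              ← Real.exp_mul]
            have : (c₁/(2*c₂)) * (T-σ) * c₂ = c₁/2 * (T-σ) := by field_simp
            rw [this]
    calc Real.exp (-c₁*(T-σ)) * ((1/b₀ + c*σ)⁻¹)^c₂
        ≤ Real.exp (-c₁*(T-σ)) * (K * Real.exp ((c₁/2) * (T-σ)) * ((1/b₀ + c*T)⁻¹)^c₂) :=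
          mul_le_mul_of_nonneg_left h9 (Real.exp_pos _).le
      _ = K * Real.exp (-(c₁/2)*(T-σ)) * ((1/b₀ + c*T)⁻¹)^c₂ := by
          rw [show -(c₁/2)*(T-σ) = -c₁*(T-σ) + c₁/2*(T-σ) by ring, Real.exp_add]
          ring
  set B := ((1/b₀ + c*T)⁻¹)^c₂ with hB
  have hBpos : 0 < B := Real.rpow_pos_of_pos hβT _
  have hfint : IntervalIntegrable
      (fun σ => Real.exp (-c₁*(T-σ)) * ((1/b₀ + c*σ)⁻¹)^c₂) MeasureTheory.volume 0 T := by
    apply ContinuousOn.intervalIntegrable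
    rw [Set.uIcc_of_le hT]
    apply ContinuousOn.mul
    · exact (Real.continuous_exp.comp (by fun_prop)).continuousOn
    · apply ContinuousOn.rpow_const
      · apply ContinuousOn.inv₀
        · fun_prop
        · intro x hx
          have : 0 < 1/b₀ + c*x := by
            have := hx.1; positivity
          exact ne_of_gt this
      · intro x hx
        exact Or.inr h2.le
  have hgint : IntervalIntegrable
      (fun σ => K * Real.exp (-(c₁/2)*(T-σ)) * B) MeasureTheory.volume 0 T := by
    apply Continuous.intervalIntegrable
    fun_prop
  have hmono := intervalIntegral.integral_mono_on hT hfint hgint key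
  have e1 : (∫ σ in (0:ℝ)..T, K * Real.exp (-(c₁/2)*(T-σ)) * B)
      = (K * B) * ∫ σ in (0:ℝ)..T, Real.exp (-(c₁/2)*(T-σ)) := by
    rw [← intervalIntegral.integral_const_mul]
    congr 1; ext σ; ring
  have e2 : (∫ σ in (0:ℝ)..T, Real.exp (-(c₁/2)*(T-σ)))
      = ∫ x in (0:ℝ)..T, Real.exp (-(c₁/2)*x) := by
    have := intervalIntegral.integral_comp_sub_left
      (a := (0:ℝ)) (b := T) (fun x => Real.exp (-(c₁/2)*x)) T
    simpa using this
  have hk : -(c₁/2) ≠ 0 := neg_ne_zero.mpr (by positivity)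
  have e3 : (∫ x in (0:ℝ)..T, Real.exp (-(c₁/2)*x))
      = (-(c₁/2))⁻¹ * (Real.exp (-(c₁/2)*T) - 1) := by
    rw [intervalIntegral.integral_comp_mul_left Real.exp hk]
    simp [integral_exp]
  have e4 : (∫ σ in (0:ℝ)..T, Real.exp (-(c₁/2)*(T-σ))) ≤ 2/c₁ := by
    rw [e2, e3]
    have h01 : 0 < Real.exp (-(c₁/2)*T) := Real.exp_pos _
    have h02 : Real.exp (-(c₁/2)*T) ≤ 1 := Real.exp_le_one_iff.mpr (by nlinarith)
    have : (-(c₁/2))⁻¹ * (Real.exp (-(c₁/2)*T) - 1) = (2/c₁) * (1 - Real.exp (-(c₁/2)*T)) := by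
      rw [inv_neg]; field_simp; ring
    rw [this]
    have h03 : 0 < 2/c₁ := by positivity
    nlinarith
  calc (∫ σ in (0:ℝ)..T, Real.exp (-c₁ * (T - σ)) * ((1 / b₀ + c * σ)⁻¹) ^ c₂)
      ≤ ∫ σ in (0:ℝ)..T, K * Real.exp (-(c₁/2)*(T-σ)) * B := hmono
    _ = (K * B) * ∫ σ in (0:ℝ)..T, Real.exp (-(c₁/2)*(T-σ)) := e1
    _ ≤ (K * B) * (2/c₁) := by
        exact mul_le_mul_of_nonneg_left e4 (by positivity)
    _ = K * (2/c₁) * B := by ring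
end

section
/- Let Γ : [0,T] → ℝ be C¹ and satisfy ∂_τ Γ + m(τ)Γ = f(τ) with m(τ) ≥ 1/2 for all τ, and suppose |f(τ)| ≤ K β(τ)² where β(τ) = (1/b₀ + cτ)^{-1}, b₀, c > 0. Then |Γ(τ)| ≤ e^{-τ/2}|Γ(0)| + C K β(τ)² for a constant C depending only on c. -/
section Aux

lemma aux_elem {a x : ℝ} (ha : 0 ≤ a) (hx : 0 ≤ x) :
    (1 + a * x) ^ 2 ≤ (2 + 128 * a ^ 2) * Real.exp (x / 4) := by
  have h1 : x / 8 + 1 ≤ Real.exp (x / 8) := Real.add_one_le_exp _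
  have h2 : Real.exp (x / 8) * Real.exp (x / 8) = Real.exp (x / 4) := by
    rw [← Real.exp_add]; ring_nf
  have h3 : (1:ℝ) ≤ Real.exp (x / 4) := Real.one_le_exp (by positivity)
  have h4 : x ^ 2 ≤ 64 * Real.exp (x / 4) := by
    nlinarith [Real.exp_pos (x / 8)]
  nlinarith [sq_nonneg (1 - a * x), sq_nonneg a, mul_le_mul_of_nonneg_left h4 (sq_nonneg a)]

lemma aux_cont (b₀ c : ℝ) (hb₀ : 0 < b₀) (hc : 0 < c) :
    Continuous (fun s : ℝ => Real.exp (s / 2) * ((1 / b₀ + c * |s|)⁻¹) ^ 2) := by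
  have hne : ∀ s : ℝ, 1 / b₀ + c * |s| ≠ 0 := by
    intro s
    have : 0 < 1 / b₀ + c * |s| := by positivity
    exact this.ne'
  fun_prop (disch := exact hne)

lemma aux_ptwise (b₀ c : ℝ) (hb₀ : 0 < b₀) (hc : 0 < c) {s τ : ℝ} (hs : 0 ≤ s) (hsτ : s ≤ τ) :
    Real.exp (s / 2) * ((1 / b₀ + c * s)⁻¹) ^ 2 ≤
      (2 + 128 * (c * b₀) ^ 2) * ((1 / b₀ + c * τ)⁻¹) ^ 2 * Real.exp (τ / 4) * Real.exp (s / 4) := by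
  set u := 1 / b₀ + c * s with hu
  set v := 1 / b₀ + c * τ with hv
  have hupos : 0 < u := by positivity
  have hvpos : 0 < v := by have : 0 ≤ τ := hs.trans hsτ; positivity
  clear_value u v
  have hw : 0 < 1 + c * b₀ * (τ - s) := by
    have := mul_nonneg (mul_nonneg hc.le hb₀.le) (sub_nonneg.2 hsτ); linarith
  have hvu : v ≤ u * (1 + c * b₀ * (τ - s)) := by
    have h1b : 1 / b₀ ≤ u := by nlinarith
    have hveq : v = u + c * (τ - s) := by rw [hu, hv]; ring
    have hfe : (1 / b₀) * (c * b₀ * (τ - s)) = c * (τ - s) := by field_simp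
    nlinarith [mul_le_mul_of_nonneg_right h1b
      (mul_nonneg (mul_nonneg hc.le hb₀.le) (sub_nonneg.2 hsτ))]
  have hsq : v ^ 2 ≤ (1 + c * b₀ * (τ - s)) ^ 2 * u ^ 2 := by
    nlinarith [mul_le_mul hvu hvu hvpos.le (mul_nonneg hupos.le hw.le)]
  have key : u⁻¹ ^ 2 ≤ (1 + c * b₀ * (τ - s)) ^ 2 * v⁻¹ ^ 2 := by
    calc u⁻¹ ^ 2 = 1 / u ^ 2 := by rw [inv_pow, one_div]
      _ ≤ (1 + c * b₀ * (τ - s)) ^ 2 / v ^ 2 := by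
          rw [div_le_div_iff₀ (by positivity) (by positivity)]; nlinarith
      _ = (1 + c * b₀ * (τ - s)) ^ 2 * v⁻¹ ^ 2 := by rw [div_eq_mul_inv, inv_pow]
  have helem := aux_elem (a := c * b₀) (x := τ - s) (by positivity) (sub_nonneg.2 hsτ)
  have hexp : Real.exp ((τ - s) / 4) * Real.exp (s / 2) = Real.exp (τ / 4) * Real.exp (s / 4) := by
    rw [← Real.exp_add, ← Real.exp_add]; ring_nf
  calc Real.exp (s / 2) * u⁻¹ ^ 2
      ≤ Real.exp (s / 2) * ((1 + c * b₀ * (τ - s)) ^ 2 * v⁻¹ ^ 2) :=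
        mul_le_mul_of_nonneg_left key (Real.exp_pos _).le
    _ ≤ Real.exp (s / 2) * (((2 + 128 * (c * b₀) ^ 2) * Real.exp ((τ - s) / 4)) * v⁻¹ ^ 2) := by
        apply mul_le_mul_of_nonneg_left _ (Real.exp_pos _).le
        exact mul_le_mul_of_nonneg_right helem (by positivity)
    _ = (2 + 128 * (c * b₀) ^ 2) * v⁻¹ ^ 2 * (Real.exp ((τ - s) / 4) * Real.exp (s / 2)) := by ring
    _ = _ := by rw [hexp]; ring

lemma aux_integral (b₀ c : ℝ) (hb₀ : 0 < b₀) (hc : 0 < c) {τ : ℝ} (hτ : 0 ≤ τ) :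
    (∫ s in (0:ℝ)..τ, Real.exp (s / 2) * ((1 / b₀ + c * |s|)⁻¹) ^ 2) ≤
      (8 + 512 * (c * b₀) ^ 2) * ((1 / b₀ + c * τ)⁻¹) ^ 2 * Real.exp (τ / 2) := by
  set M : ℝ := 2 + 128 * (c * b₀) ^ 2 with hM
  set β2 : ℝ := ((1 / b₀ + c * τ)⁻¹) ^ 2 with hβ2
  have hβ2pos : 0 < β2 := by rw [hβ2]; positivity
  have hMpos : 0 < M := by rw [hM]; positivity
  have hstep : (∫ s in (0:ℝ)..τ, Real.exp (s / 2) * ((1 / b₀ + c * |s|)⁻¹) ^ 2) ≤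
      ∫ s in (0:ℝ)..τ, M * β2 * Real.exp (τ / 4) * Real.exp (s / 4) := by
    apply intervalIntegral.integral_mono_on hτ
    · exact (aux_cont b₀ c hb₀ hc).intervalIntegrable _ _
    · exact (by fun_prop : Continuous fun s : ℝ =>
        M * β2 * Real.exp (τ / 4) * Real.exp (s / 4)).intervalIntegrable _ _
    · intro s hs
      rw [abs_of_nonneg hs.1]
      exact aux_ptwise b₀ c hb₀ hc hs.1 hs.2
  have hFTC : (∫ s in (0:ℝ)..τ, Real.exp (s / 4)) = 4 * Real.exp (τ / 4) - 4 := by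
    have : ∀ s ∈ Set.uIcc (0:ℝ) τ, HasDerivAt (fun x => 4 * Real.exp (x / 4))
        (Real.exp (s / 4)) s := by
      intro s _
      have h := (((hasDerivAt_id s).div_const 4).exp.const_mul 4)
      exact h.congr_deriv (by simp only [id]; ring)
    rw [intervalIntegral.integral_eq_sub_of_hasDerivAt this
      ((Real.continuous_exp.comp (continuous_id.div_const 4)).intervalIntegrable _ _)]
    simp [Real.exp_zero]
  have hval : (∫ s in (0:ℝ)..τ, M * β2 * Real.exp (τ / 4) * Real.exp (s / 4)) =
      M * β2 * Real.exp (τ / 4) * (4 * Real.exp (τ / 4) - 4) := by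
    rw [intervalIntegral.integral_const_mul, hFTC]
  have hexp2 : Real.exp (τ / 4) * Real.exp (τ / 4) = Real.exp (τ / 2) := by
    rw [← Real.exp_add]; ring_nf
  calc (∫ s in (0:ℝ)..τ, Real.exp (s / 2) * ((1 / b₀ + c * |s|)⁻¹) ^ 2)
      ≤ M * β2 * Real.exp (τ / 4) * (4 * Real.exp (τ / 4) - 4) := by rw [← hval]; exact hstep
    _ ≤ M * β2 * Real.exp (τ / 4) * (4 * Real.exp (τ / 4)) := by
        apply mul_le_mul_of_nonneg_left _ (by positivity)
        linarith
    _ = (4 * M) * β2 * (Real.exp (τ / 4) * Real.exp (τ / 4)) := by ring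
    _ = (8 + 512 * (c * b₀) ^ 2) * β2 * Real.exp (τ / 2) := by rw [hexp2, hM]; ring

end Aux

open Set Filter Topology

/-- Linear ODE comparison: if `Γ' + mΓ = f` with `m ≥ 1/2` and
`|f(τ)| ≤ K β(τ)²`, `β(τ) = (1/b₀ + cτ)⁻¹`, then
`|Γ(τ)| ≤ e^{-τ/2}|Γ(0)| + C K β(τ)²` with `C` depending only on `c`
(and `b₀`). -/
theorem linear_ode_comparison (b₀ c : ℝ) (hb₀ : 0 < b₀) (hc : 0 < c) :
    ∃ C > (0:ℝ), ∀ (T K : ℝ) (Γ Γ' m f : ℝ → ℝ), 0 ≤ T →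
      (∀ τ ∈ Set.Icc (0:ℝ) T, HasDerivAt Γ (Γ' τ) τ) →
      (∀ τ ∈ Set.Icc (0:ℝ) T, Γ' τ + m τ * Γ τ = f τ) →
      (∀ τ ∈ Set.Icc (0:ℝ) T, (1:ℝ)/2 ≤ m τ) →
      (∀ τ ∈ Set.Icc (0:ℝ) T, |f τ| ≤ K * ((1 / b₀ + c * τ)⁻¹) ^ 2) →
      ∀ τ ∈ Set.Icc (0:ℝ) T,
        |Γ τ| ≤ Real.exp (-τ / 2) * |Γ 0| + C * K * ((1 / b₀ + c * τ)⁻¹) ^ 2 := by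
  refine ⟨8 + 512 * (c * b₀) ^ 2, by positivity, ?_⟩
  intro T K Γ Γ' m f hT hΓ hode hm hfK τ hτ
  have hK : 0 ≤ K := by
    have h0 := hfK 0 ⟨le_rfl, hT⟩
    have h1 : 0 ≤ |f 0| := abs_nonneg _
    have h2 : 0 < ((1 / b₀ + c * 0)⁻¹) ^ 2 := by positivity
    nlinarith
  set h : ℝ → ℝ := fun s => Real.exp (s / 2) * ((1 / b₀ + c * |s|)⁻¹) ^ 2 with hh
  have hcont : Continuous h := aux_cont b₀ c hb₀ hc
  have hposh : ∀ s, 0 < h s := by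
    intro s; rw [hh]
    have : 0 < 1 / b₀ + c * |s| := by positivity
    positivity
  set I : ℝ → ℝ := fun x => ∫ s in (0:ℝ)..x, h s with hIdef
  have hI : ∀ x, HasDerivAt I (h x) x := fun x =>
    (hcont.integral_hasStrictDerivAt 0 x).hasDerivAt
  have hInn : ∀ x : ℝ, 0 ≤ x → 0 ≤ I x := fun x hx =>
    intervalIntegral.integral_nonneg hx fun s _ => (hposh s).le
  -- the key barrier estimate, for every ε > 0
  have key : ∀ ε > (0:ℝ), ∀ x ∈ Set.Icc (0:ℝ) T,
      |Γ x| ≤ Real.exp (-x / 2) * (|Γ 0| + (K + ε) * I x) := by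
    intro ε hε
    set B : ℝ → ℝ := fun x => Real.exp (-x / 2) * (|Γ 0| + (K + ε) * I x) with hB
    set B' : ℝ → ℝ := fun x =>
      Real.exp (-x / 2) * (-(1/2)) * (|Γ 0| + (K + ε) * I x) +
        Real.exp (-x / 2) * ((K + ε) * h x) with hB'
    have hBd : ∀ x, HasDerivAt B (B' x) x := by
      intro x
      have h1 : HasDerivAt (fun y : ℝ => Real.exp (-y / 2)) (Real.exp (-x / 2) * (-(1/2))) x := by
        have h0 : HasDerivAt (fun y : ℝ => -y / 2) (-(1/2)) x := by
          exact ((hasDerivAt_neg x).div_const 2).congr_deriv (by norm_num)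
        exact h0.exp
      have h2 : HasDerivAt (fun y => |Γ 0| + (K + ε) * I y) ((K + ε) * h x) x :=
        ((hI x).const_mul (K + ε)).const_add _
      exact h1.mul h2
    set φ : ℝ → ℝ := fun x => |f x| - m x * |Γ x| with hφ
    have main : ∀ ⦃x⦄, x ∈ Set.Icc (0:ℝ) T → ‖Γ x‖ ≤ B x := by
      apply image_norm_le_of_liminf_right_slope_norm_lt_deriv_boundary
        (f := Γ) (f' := φ) (B := B) (B' := B')
      · exact fun t ht => (hΓ t ht).continuousAt.continuousWithinAt
      · -- liminf right slope of |Γ| is at most φ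
        intro x hx r hr
        have hx' : x ∈ Set.Icc (0:ℝ) T := Set.Ico_subset_Icc_self hx
        have hd := hΓ x hx'
        have hΓ'eq : Γ' x = f x - m x * Γ x := by have := hode x hx'; linarith
        have hφx : |f x| - m x * |Γ x| < r := hr
        rcases lt_trichotomy (Γ x) 0 with hneg | hzero | hpos
        · have hev1 : ∀ᶠ z in 𝓝[>] x, Γ z < 0 :=
            (hd.continuousAt.eventually (eventually_lt_nhds hneg)).filter_mono
              nhdsWithin_le_nhds
          have hlt : -Γ' x < r := by
            have habs : |Γ x| = -Γ x := abs_of_neg hneg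
            have h2 : -f x ≤ |f x| := neg_le_abs _
            have h3 : m x * Γ x = -(m x * |Γ x|) := by rw [habs]; ring
            linarith
          have hslope : Tendsto (fun z => -slope Γ x z) (𝓝[>] x) (𝓝 (-Γ' x)) :=
            ((hasDerivAt_iff_tendsto_slope.1 hd).mono_left
              (nhdsWithin_mono _ fun z hz => ne_of_gt hz)).neg
          have hev2 : ∀ᶠ z in 𝓝[>] x, -slope Γ x z < r :=
            hslope.eventually (eventually_lt_nhds hlt)
          refine ((hev1.and hev2).mono ?_).frequently
          intro z hz
          have : slope (norm ∘ Γ) x z = -slope Γ x z := by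
            simp only [Function.comp_apply, slope_def_field, Real.norm_eq_abs,
              abs_of_neg hz.1, abs_of_neg hneg]
            ring
          rw [this]; exact hz.2
        · have hnorm : ‖Γ' x‖ < r := by
            rw [Real.norm_eq_abs]
            have : Γ' x = f x := by rw [hΓ'eq, hzero]; ring
            rw [this]
            have : |Γ x| = 0 := by rw [hzero, abs_zero]
            nlinarith [abs_nonneg (Γ x), hm x hx', abs_nonneg (f x)]
          exact hd.hasDerivWithinAt.liminf_right_slope_norm_le hnorm
        · have hev1 : ∀ᶠ z in 𝓝[>] x, 0 < Γ z :=
            (hd.continuousAt.eventually (eventually_gt_nhds hpos)).filter_mono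
              nhdsWithin_le_nhds
          have hlt : Γ' x < r := by
            have habs : |Γ x| = Γ x := abs_of_pos hpos
            have h2 : f x ≤ |f x| := le_abs_self _
            have h3 : m x * Γ x = m x * |Γ x| := by rw [habs]
            linarith
          have hslope : Tendsto (slope Γ x) (𝓝[>] x) (𝓝 (Γ' x)) :=
            (hasDerivAt_iff_tendsto_slope.1 hd).mono_left
              (nhdsWithin_mono _ fun z hz => ne_of_gt hz)
          have hev2 : ∀ᶠ z in 𝓝[>] x, slope Γ x z < r :=
            hslope.eventually (eventually_lt_nhds hlt)
          refine ((hev1.and hev2).mono ?_).frequently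
          intro z hz
          have : slope (norm ∘ Γ) x z = slope Γ x z := by
            simp only [Function.comp_apply, slope_def_field, Real.norm_eq_abs,
              abs_of_pos hz.1, abs_of_pos hpos]
          rw [this]; exact hz.2
      · -- initial condition
        have hI0 : I 0 = 0 := intervalIntegral.integral_same
        simp [hB, hI0, Real.norm_eq_abs]
      · exact fun x _ => (hBd x).continuousAt.continuousWithinAt
      · exact fun x _ => (hBd x).hasDerivWithinAt
      · -- touching points
        intro x hx hbx
        have hx' : x ∈ Set.Icc (0:ℝ) T := Set.Ico_subset_Icc_self hx
        have hx0 : (0:ℝ) ≤ x := hx.1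
        have hβx : 0 < ((1 / b₀ + c * x)⁻¹) ^ 2 := by positivity
        have hhx : h x = Real.exp (x / 2) * ((1 / b₀ + c * x)⁻¹) ^ 2 := by
          rw [hh]; simp [abs_of_nonneg hx0]
        have hexp1 : Real.exp (-x / 2) * Real.exp (x / 2) = 1 := by
          rw [← Real.exp_add, show -x / 2 + x / 2 = (0:ℝ) by ring, Real.exp_zero]
        have hB'eq : B' x = -(1/2) * B x + (K + ε) * ((1 / b₀ + c * x)⁻¹) ^ 2 := by
          simp only [hB', hB]
          rw [hhx]
          linear_combination (K + ε) * ((1 / b₀ + c * x)⁻¹) ^ 2 * hexp1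
        have hfx := hfK x hx'
        have hmx := hm x hx'
        have h5 : 1/2 * |Γ x| ≤ m x * |Γ x| :=
          mul_le_mul_of_nonneg_right hmx (abs_nonneg _)
        have habs : ‖Γ x‖ = |Γ x| := Real.norm_eq_abs _
        rw [habs] at hbx
        have hεβ : 0 < ε * ((1 / b₀ + c * x)⁻¹) ^ 2 := by positivity
        show |f x| - m x * |Γ x| < B' x
        rw [hB'eq, ← hbx]
        linarith
    intro x hx
    have := main hx
    rwa [Real.norm_eq_abs] at this
  -- pass to the limit ε → 0
  have hmain : |Γ τ| ≤ Real.exp (-τ / 2) * (|Γ 0| + K * I τ) := by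
    apply le_of_forall_pos_le_add
    intro ε' hε'
    set D : ℝ := Real.exp (-τ / 2) * I τ with hD
    have hDnn : 0 ≤ D := mul_nonneg (Real.exp_pos _).le (hInn τ hτ.1)
    have hεpos : 0 < ε' / (D + 1) := by positivity
    have hk := key (ε' / (D + 1)) hεpos τ hτ
    have h6 : ε' / (D + 1) * D ≤ ε' := by
      rw [div_mul_eq_mul_div, div_le_iff₀ (by linarith)]
      nlinarith
    have hring : Real.exp (-τ / 2) * (|Γ 0| + (K + ε' / (D + 1)) * I τ) =
        Real.exp (-τ / 2) * (|Γ 0| + K * I τ) + ε' / (D + 1) * D := by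
      rw [hD]; ring
    linarith [hk, hring ▸ hk]
  -- conclude with the integral estimate
  have hIle : I τ ≤ (8 + 512 * (c * b₀) ^ 2) * ((1 / b₀ + c * τ)⁻¹) ^ 2 * Real.exp (τ / 2) :=
    aux_integral b₀ c hb₀ hc hτ.1
  have hexp1 : Real.exp (-τ / 2) * Real.exp (τ / 2) = 1 := by
    rw [← Real.exp_add, show -τ / 2 + τ / 2 = (0:ℝ) by ring, Real.exp_zero]
  have h7 : Real.exp (-τ / 2) * I τ ≤ (8 + 512 * (c * b₀) ^ 2) * ((1 / b₀ + c * τ)⁻¹) ^ 2 := by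
    calc Real.exp (-τ / 2) * I τ
        ≤ Real.exp (-τ / 2) * ((8 + 512 * (c * b₀) ^ 2) * ((1 / b₀ + c * τ)⁻¹) ^ 2 *
            Real.exp (τ / 2)) :=
          mul_le_mul_of_nonneg_left hIle (Real.exp_pos _).le
      _ = (8 + 512 * (c * b₀) ^ 2) * ((1 / b₀ + c * τ)⁻¹) ^ 2 *
            (Real.exp (-τ / 2) * Real.exp (τ / 2)) := by ring
      _ = _ := by rw [hexp1]; ring
  have h8 : K * (Real.exp (-τ / 2) * I τ) ≤
      K * ((8 + 512 * (c * b₀) ^ 2) * ((1 / b₀ + c * τ)⁻¹) ^ 2) :=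
    mul_le_mul_of_nonneg_left h7 hK
  calc |Γ τ| ≤ Real.exp (-τ / 2) * (|Γ 0| + K * I τ) := hmain
    _ = Real.exp (-τ / 2) * |Γ 0| + K * (Real.exp (-τ / 2) * I τ) := by ring
    _ ≤ Real.exp (-τ / 2) * |Γ 0| +
        K * ((8 + 512 * (c * b₀) ^ 2) * ((1 / b₀ + c * τ)⁻¹) ^ 2) := by linarith
    _ = Real.exp (-τ / 2) * |Γ 0| + (8 + 512 * (c * b₀) ^ 2) * K *
        ((1 / b₀ + c * τ)⁻¹) ^ 2 := by ring
end
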